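/- Let G be a finite bipartite graph with nonempty parts A and B equipped with a biconvex ordering (<_A, <_B), and let P be a path in G whose vertices from A appear along P in increasing order of <_A, with a_first the smallest and a_last the largest vertex of A on P with respect to <_A. Then every vertex a ∈ A with a_first <_A a <_A a_last that is not on P is adjacent to some vertex of P. -/

import Mathlib

/-- `G` is bipartite with parts `A` and `B`. -/
def IsBipartiteWith {V : Type*} (G : SimpleGraph V) (A B : Set V) : Prop :=
  A ∩ B = ∅ ∧ A ∪ B = Set.univ ∧
    ∀ ⦃u v : V⦄, G.Adj u v → (u ∈ A ∧ v ∈ B) ∨ (u ∈ B ∧ v ∈ A)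

/-- The pair of linear orders `(lA, lB)` is a biconvex ordering of `G = (A, B, E)`. -/
def BiconvexOrdering {V : Type*} (G : SimpleGraph V) (A B : Set V)
    (lA : LinearOrder ↥A) (lB : LinearOrder ↥B) : Prop :=
  (∀ (a : ↥A) (x y z : ↥B), lB.le x y → lB.le y z →
      G.Adj ↑a ↑x → G.Adj ↑a ↑z → G.Adj ↑a ↑y) ∧
  (∀ (b : ↥B) (x y z : ↥A), lA.le x y → lA.le y z →
      G.Adj ↑x ↑b → G.Adj ↑z ↑b → G.Adj ↑y ↑b)

/-- Let `P` be a path whose `A`-vertices appear along `P` in increasing order of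
`lA`, with smallest `A`-vertex `afirst` and largest `A`-vertex `alast` on `P`.
Then every vertex of `A` strictly between `afirst` and `alast` that is not on
`P` is adjacent to some vertex of `P`. -/
theorem a_vertices_dominated_by_increasing_path
    {V : Type*} [Fintype V] (G : SimpleGraph V)
    (A B : Set V) (hA : A.Nonempty) (hB : B.Nonempty)
    (hbip : IsBipartiteWith G A B)
    (lA : LinearOrder ↥A) (lB : LinearOrder ↥B)
    (hbiconvex : BiconvexOrdering G A B lA lB)
    (u v : V) (p : G.Walk u v) (hp : p.IsPath)
    (hincr : ∀ (i j : Fin p.support.length), i < j →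
      ∀ (hi : p.support.get i ∈ A) (hj : p.support.get j ∈ A),
        lA.lt ⟨p.support.get i, hi⟩ ⟨p.support.get j, hj⟩)
    (afirst alast : ↥A)
    (hfirst : (↑afirst : V) ∈ p.support) (hlast : (↑alast : V) ∈ p.support)
    (hbetween : ∀ a : ↥A, (↑a : V) ∈ p.support → lA.le afirst a ∧ lA.le a alast) :
    ∀ a : ↥A, lA.lt afirst a → lA.lt a alast → (↑a : V) ∉ p.support →
      ∃ x ∈ p.support, G.Adj ↑a x := by

  classical
  letI := lA
  letI := lB
  intro a hfa hal ha_not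
  obtain ⟨hdisj, -, hedge⟩ := hbip
  have hnotB : ∀ x : V, x ∈ A → x ∉ B := by
    intro x hx hx'
    have : x ∈ A ∩ B := ⟨hx, hx'⟩
    rw [hdisj] at this
    exact this
  have hchain := List.isChain_iff_getElem.mp p.isChain_adj_support
  obtain ⟨fi, hfi⟩ := List.mem_iff_get.mp hfirst
  obtain ⟨li, hli⟩ := List.mem_iff_get.mp hlast
  set T : Finset (Fin p.support.length) :=
    Finset.univ.filter (fun i => ∃ h : p.support.get i ∈ A, (⟨p.support.get i, h⟩ : ↥A) < a)
    with hT
  have hfiA : p.support.get fi ∈ A := by rw [hfi]; exact afirst.2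
  have hfieq : (⟨p.support.get fi, hfiA⟩ : ↥A) = afirst := Subtype.ext hfi
  have hTne : T.Nonempty := ⟨fi, by
    simp only [hT, Finset.mem_filter, Finset.mem_univ, true_and]
    exact ⟨hfiA, by rw [hfieq]; exact hfa⟩⟩
  set i := T.max' hTne with hi
  have himem : i ∈ T := T.max'_mem hTne
  rw [hT, Finset.mem_filter] at himem
  obtain ⟨-, hiA, hia⟩ := himem
  have hliA : p.support.get li ∈ A := by rw [hli]; exact alast.2
  have hlieq : (⟨p.support.get li, hliA⟩ : ↥A) = alast := Subtype.ext hli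
  -- i < li
  have hil : i < li := by
    rcases lt_trichotomy i li with h | h | h
    · exact h
    · exfalso
      have : (⟨p.support.get i, hiA⟩ : ↥A) = alast := by rw [← hlieq]; congr 1; rw [h]
      rw [this] at hia
      exact absurd (hia.trans hal) (lt_irrefl _)
    · exfalso
      have := hincr li i h hliA hiA
      rw [hlieq] at this
      exact absurd ((hal.trans this).trans hia) (lt_irrefl _)
  have h1 : (i : ℕ) + 1 < p.support.length := lt_of_le_of_lt hil li.isLt
  have hadj1 : G.Adj (p.support.get i) (p.support.get ⟨(i : ℕ) + 1, h1⟩) := by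
    have := hchain (i : ℕ) (by omega)
    convert this using 3
    all_goals rfl
  have hbB : p.support.get ⟨(i : ℕ) + 1, h1⟩ ∈ B := by
    rcases hedge hadj1 with ⟨-, h⟩ | ⟨h, -⟩
    · exact h
    · exact absurd h (hnotB _ hiA)
  -- i + 1 ≠ li, hence i + 2 ≤ li
  have h2 : (i : ℕ) + 2 ≤ (li : ℕ) := by
    rcases Nat.lt_or_ge ((i : ℕ) + 1) (li : ℕ) with h | h
    · omega
    · exfalso
      have heq : (⟨(i : ℕ) + 1, h1⟩ : Fin p.support.length) = li := by
        have hi' : (i : ℕ) < (li : ℕ) := hil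
        apply Fin.ext
        simp only [Fin.val_mk]
        omega
      rw [heq] at hbB
      exact hnotB _ hliA hbB
  have h2' : (i : ℕ) + 2 < p.support.length := lt_of_le_of_lt h2 li.isLt
  have hadj2 : G.Adj (p.support.get ⟨(i : ℕ) + 1, h1⟩) (p.support.get ⟨(i : ℕ) + 2, h2'⟩) := by
    have := hchain ((i : ℕ) + 1) (by omega)
    convert this using 3
    all_goals rfl
  have ha2A : p.support.get ⟨(i : ℕ) + 2, h2'⟩ ∈ A := by
    rcases hedge hadj2 with ⟨h, -⟩ | ⟨-, h⟩
    · exact absurd hbB (hnotB _ h)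
    · exact h
  have ha2ge : a ≤ (⟨p.support.get ⟨(i : ℕ) + 2, h2'⟩, ha2A⟩ : ↥A) := by
    by_contra hcon
    push_neg at hcon
    have hmem2 : (⟨(i : ℕ) + 2, h2'⟩ : Fin p.support.length) ∈ T := by
      rw [hT, Finset.mem_filter]
      exact ⟨Finset.mem_univ _, ha2A, hcon⟩
    have := T.le_max' _ hmem2
    rw [← hi] at this
    have : (i : ℕ) + 2 ≤ (i : ℕ) := this
    omega
  refine ⟨p.support.get ⟨(i : ℕ) + 1, h1⟩, List.get_mem _ _, ?_⟩
  have := hbiconvex.2 ⟨p.support.get ⟨(i : ℕ) + 1, h1⟩, hbB⟩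
    ⟨p.support.get i, hiA⟩ a ⟨p.support.get ⟨(i : ℕ) + 2, h2'⟩, ha2A⟩
    (le_of_lt hia) ha2ge hadj1 hadj2.symm
  exact this
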